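/- Let ℓ : ℕ → ℝ satisfy ℓ(0) = ℓ(1), the recurrence ℓ(k+1) = ℓ(k) - ℓ(k-1)/(k+1) for all integers k ≥ 1, and suppose the series ∑_{k=0}^{∞} ℓ(k) converges with sum 1. Then ℓ(k) = e^{-1}/k! for all integers k ≥ 0. (This is the limiting probability distribution of the number of leaves in a random recursive hypergraph as its size tends to infinity.) -/

import Mathlib

/-- The limiting distribution of the number of leaves in an RRH is Poisson with
parameter one: `ℓ(k) = e⁻¹/k!`. -/
theorem rrh_leaves_poisson (ℓ : ℕ → ℝ) (h01 : ℓ 0 = ℓ 1)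
    (hrec : ∀ k : ℕ, 1 ≤ k → ℓ (k + 1) = ℓ k - ℓ (k - 1) / ((k : ℝ) + 1))
    (hsum : Filter.Tendsto (fun n : ℕ => ∑ k ∈ Finset.range n, ℓ k)
      Filter.atTop (nhds 1)) :
    ∀ k : ℕ, ℓ k = Real.exp (-1) / (k.factorial : ℝ) := by
  -- step 1: ℓ k = ℓ 0 / k!
  have key : ∀ k : ℕ, ℓ k = ℓ 0 / k.factorial ∧ ℓ (k + 1) = ℓ 0 / (k + 1).factorial := by
    intro k
    induction k with
    | zero => constructor <;> simp [← h01]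
    | succ n ih =>
      refine ⟨ih.2, ?_⟩
      have h := hrec (n + 1) (by omega)
      simp only [Nat.add_sub_cancel] at h
      rw [h, ih.1, ih.2]
      have hf : ∀ m : ℕ, (m.factorial : ℝ) ≠ 0 := fun m => by
        exact_mod_cast m.factorial_ne_zero
      have h1 : ((n + 1 + 1).factorial : ℝ) = ((n + 1).factorial : ℝ) * (n + 2) := by
        push_cast [Nat.factorial_succ]; ring
      have h2 : ((n + 1).factorial : ℝ) = (n.factorial : ℝ) * (n + 1) := by
        push_cast [Nat.factorial_succ]; ring
      rw [h1, h2]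
      field_simp
      push_cast; ring
  -- step 2: the sum is ℓ 0 * e
  have he : HasSum (fun k : ℕ => ((k.factorial : ℝ))⁻¹) (Real.exp 1) := by
    have := NormedSpace.exp_series_hasSum_exp' (𝕂 := ℝ) (1 : ℝ)
    rw [Real.exp_eq_exp_ℝ]
    simpa using this
  have hs : Filter.Tendsto (fun n : ℕ => ∑ k ∈ Finset.range n, ℓ k)
      Filter.atTop (nhds (ℓ 0 * Real.exp 1)) := by
    have := (he.mul_left (ℓ 0)).tendsto_sum_nat
    refine this.congr fun n => Finset.sum_congr rfl fun k _ => ?_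
    rw [(key k).1]; ring
  have h0 : ℓ 0 * Real.exp 1 = 1 := tendsto_nhds_unique hs hsum
  have hℓ0 : ℓ 0 = Real.exp (-1) := by
    rw [Real.exp_neg]
    field_simp at h0 ⊢
    linarith [h0]
  intro k
  rw [(key k).1, hℓ0]
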